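/- Let D be a unital C*-algebra and let E be a C*-subalgebra of D containing the unit of D, and suppose E is stably finite. Then B = {f ∈ C([0,1], D) : f(0) ∈ E} is a stably finite unital C*-algebra. (Applied with E the canonical unital copy of a stably finite unital C*-algebra B₀ inside a C*-tensor product A ⊗ B₀, this says that (CA)⁺ ⊗ B₀ is stably finite for every unital C*-algebra A.) -/

import Mathlib

/-- A unital *-ring is *finite* if `x* x = 1` implies `x x* = 1`. -/
def IsFiniteStarRing (D : Type*) [Ring D] [StarRing D] : Prop :=
  ∀ x : D, star x * x = 1 → x * star x = 1

/-- A unital *-ring is *stably finite* if every matrix algebra `Mₙ(D)` (`n ≥ 1`) is finite. -/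
def IsStablyFinite (D : Type*) [Ring D] [StarRing D] : Prop :=
  ∀ n : ℕ, 1 ≤ n → IsFiniteStarRing (Matrix (Fin n) (Fin n) D)

/-- For a unital C*-algebra `D` and a unital C*-subalgebra `E ⊆ D`, the unital C*-algebra
`B = {f ∈ C([0,1], D) : f(0) ∈ E}`, realized as a *-subalgebra of `C([0,1], D)`. -/
def valueAtZeroIn (D : Type*) [CStarAlgebra D] (E : StarSubalgebra ℂ D) :
    StarSubalgebra ℂ C(unitInterval, D) where
  carrier := {f | f 0 ∈ E}
  mul_mem' {f g} hf hg := by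
    simpa [Set.mem_setOf_eq] using mul_mem hf hg
  one_mem' := by
    simpa [Set.mem_setOf_eq] using one_mem E
  add_mem' {f g} hf hg := by
    simpa [Set.mem_setOf_eq] using add_mem hf hg
  zero_mem' := by
    simpa [Set.mem_setOf_eq] using zero_mem E
  algebraMap_mem' r := by
    simpa [Set.mem_setOf_eq, Algebra.algebraMap_eq_smul_one] using E.algebraMap_mem r
  star_mem' {f} hf := by
    simpa [Set.mem_setOf_eq] using star_mem hf

/-- Evaluation at `t` as a ring hom from `valueAtZeroIn D E` to `D`. -/
def evHom (D : Type*) [CStarAlgebra D] (E : StarSubalgebra ℂ D) (t : unitInterval) :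
    (valueAtZeroIn D E) →+* D where
  toFun f := (f : C(unitInterval, D)) t
  map_one' := rfl
  map_mul' _ _ := rfl
  map_zero' := rfl
  map_add' _ _ := rfl

/-- Inclusion `E → D` as a ring hom. -/
def inclHom (D : Type*) [CStarAlgebra D] (E : StarSubalgebra ℂ D) : E →+* D where
  toFun e := (e : D)
  map_one' := rfl
  map_mul' _ _ := rfl
  map_zero' := rfl
  map_add' _ _ := rfl

/-- A self-adjoint idempotent matrix with all entries of norm `< 1/n` is zero. -/
lemma selfAdjoint_idem_small_eq_zero {D : Type*} [CStarAlgebra D] {n : ℕ} (hn : 1 ≤ n)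
    (q : Matrix (Fin n) (Fin n) D) (hidem : q * q = q) (hsa : star q = q)
    (hsmall : ∀ i j, ‖q i j‖ < 1 / n) : q = 0 := by
  haveI : Nonempty (Fin n) := ⟨⟨0, hn⟩⟩
  set M : ℝ := Finset.univ.sup' Finset.univ_nonempty
    (fun p : Fin n × Fin n => ‖q p.1 p.2‖) with hM
  have hle : ∀ i j, ‖q i j‖ ≤ M := fun i j =>
    Finset.le_sup' (f := fun p : Fin n × Fin n => ‖q p.1 p.2‖) (Finset.mem_univ (i, j))
  obtain ⟨⟨i, j⟩, -, hij⟩ := Finset.exists_mem_eq_sup' Finset.univ_nonempty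
    (fun p : Fin n × Fin n => ‖q p.1 p.2‖)
  have h1 : q.conjTranspose * q = q := by
    rw [← Matrix.star_eq_conjTranspose, hsa, hidem]
  have hqentry : q i j = ∑ k, star (q k i) * q k j := by
    conv_lhs => rw [← h1]
    rw [Matrix.mul_apply]
    simp [Matrix.conjTranspose_apply]
  have hMeq : M = ‖q i j‖ := hM.trans hij
  have hbound : M ≤ n * (M * M) := by
    refine hMeq.le.trans ?_
    calc ‖q i j‖ = ‖∑ k, star (q k i) * q k j‖ := by rw [hqentry]
    _ ≤ ∑ k : Fin n, ‖star (q k i) * q k j‖ := norm_sum_le _ _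
    _ ≤ ∑ k : Fin n, M * M := by
        refine Finset.sum_le_sum fun k _ => ?_
        calc ‖star (q k i) * q k j‖ ≤ ‖star (q k i)‖ * ‖q k j‖ := norm_mul_le _ _
        _ = ‖q k i‖ * ‖q k j‖ := by rw [norm_star]
        _ ≤ M * M := mul_le_mul (hle k i) (hle k j) (norm_nonneg _)
            (le_trans (norm_nonneg _) (hle k i))
    _ = n * (M * M) := by simp [Finset.sum_const, nsmul_eq_mul]
  have hMsmall : M < 1 / n := lt_of_eq_of_lt hMeq (hsmall i j)
  have hM0 : M ≤ 0 := by
    by_contra h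
    push_neg at h
    have hn' : (0 : ℝ) < n := by exact_mod_cast hn
    have hMn : M * n < 1 := (lt_div_iff₀ hn').mp hMsmall
    nlinarith [hbound, hMn, h]
  ext i' j'
  have : ‖q i' j'‖ ≤ 0 := le_trans (hle i' j') hM0
  simpa using le_antisymm this (norm_nonneg _)

/-- Let `D` be a unital C*-algebra and let `E` be a (closed) C*-subalgebra of `D` containing
the unit of `D`, and suppose `E` is stably finite.  Then
`B = {f ∈ C([0,1], D) : f(0) ∈ E}` is a stably finite unital C*-algebra. -/
theorem stablyFinite_valueAtZeroIn (D : Type*) [CStarAlgebra D] (E : StarSubalgebra ℂ D)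
    (hEclosed : IsClosed (E : Set D)) (hE : IsStablyFinite E) :
    IsStablyFinite (valueAtZeroIn D E) := by
  intro n hn x hx
  let B := valueAtZeroIn D E
  set φ : unitInterval → (B →+* D) := fun t => evHom D E t with hφ
  have hφstar : ∀ t (f : B), φ t (star f) = star (φ t f) := fun t f => rfl
  -- evaluation of matrices
  set y : unitInterval → Matrix (Fin n) (Fin n) D := fun t => x.map (φ t) with hy
  have hmapstar : ∀ t, (star x).map (φ t) = star (y t) := by
    intro t
    rw [Matrix.star_eq_conjTranspose, Matrix.star_eq_conjTranspose]
    exact Matrix.conjTranspose_map (φ t) fun a => (hφstar t a).symm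
  have hmapmul : ∀ t (a b : Matrix (Fin n) (Fin n) B),
      (a * b).map (φ t) = a.map (φ t) * b.map (φ t) := by
    intro t a b
    simpa only [RingHom.mapMatrix_apply] using map_mul (RingHom.mapMatrix (φ t)) a b
  have hmapone : ∀ t, (1 : Matrix (Fin n) (Fin n) B).map (φ t) = 1 := by
    intro t
    simpa only [RingHom.mapMatrix_apply] using map_one (RingHom.mapMatrix (m := Fin n) (φ t))
  -- star y t * y t = 1 for all t
  have hiso : ∀ t, star (y t) * y t = 1 := by
    intro t
    rw [← hmapstar t, ← hmapmul t, hx, hmapone t]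
  -- the projection p t := y t * star (y t)
  set p : unitInterval → Matrix (Fin n) (Fin n) D :=
    fun t => (x * star x).map (φ t) with hp
  have hpt : ∀ t, p t = y t * star (y t) := by
    intro t
    rw [hp]
    simp only
    rw [hmapmul t, hmapstar t]
  -- p 0 = 1 via stable finiteness of E
  have hp0 : p 0 = 1 := by
    set ι : E →+* D := inclHom D E with hι
    have hιinj : Function.Injective ι := fun a b h => Subtype.ext h
    set z : Matrix (Fin n) (Fin n) E :=
      fun i j => ⟨(x i j : C(unitInterval, D)) 0, (x i j).2⟩ with hz
    have hzmap : z.map ι = y 0 := rfl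
    have hzstar : (star z).map ι = star (y 0) := by
      rw [Matrix.star_eq_conjTranspose, Matrix.star_eq_conjTranspose, ← hzmap]
      exact Matrix.conjTranspose_map ι fun a => rfl
    have hmapmulE : ∀ (a b : Matrix (Fin n) (Fin n) E),
        (a * b).map ι = a.map ι * b.map ι := by
      intro a b
      simpa only [RingHom.mapMatrix_apply] using map_mul (RingHom.mapMatrix ι) a b
    have hmaponeE : (1 : Matrix (Fin n) (Fin n) E).map ι = 1 := by
      simpa only [RingHom.mapMatrix_apply] using map_one (RingHom.mapMatrix (m := Fin n) ι)
    have hmatinj : Function.Injective (fun M : Matrix (Fin n) (Fin n) E => M.map ι) :=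
      Matrix.map_injective hιinj
    have hz1 : star z * z = 1 := by
      apply hmatinj
      simp only
      rw [hmapmulE, hzstar, hzmap, hiso 0, hmaponeE]
    have hz2 : z * star z = 1 := hE n hn z hz1
    have : (z * star z).map ι = (1 : Matrix (Fin n) (Fin n) E).map ι := by rw [hz2]
    rw [hmapmulE, hzmap, hzstar, hmaponeE] at this
    rw [hpt 0, this]
  -- entries of p are continuous in t
  have hpcont : Continuous p := by
    apply continuous_matrix
    intro i j
    exact ((x * star x) i j : C(unitInterval, D)).continuous
  -- the set where p t = 1 is clopen
  set S : Set unitInterval := p ⁻¹' {1} with hS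
  have hSclosed : IsClosed S := (isClosed_singleton).preimage hpcont
  have hSopen : IsOpen S := by
    rw [isOpen_iff_mem_nhds]
    intro t₀ ht₀
    have ht₀' : p t₀ = 1 := ht₀
    -- the set where all entries of 1 - p are small
    set U : Set unitInterval := {t | ∀ i j, ‖(1 - p t) i j‖ < 1 / n} with hU
    have hUopen : IsOpen U := by
      have : U = ⋂ i, ⋂ j, {t | ‖(1 - p t) i j‖ < 1 / n} := by
        ext t; simp [hU, Set.mem_iInter]
      rw [this]
      refine isOpen_iInter_of_finite fun i => isOpen_iInter_of_finite fun j => ?_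
      have hc : Continuous fun t => ‖(1 - p t) i j‖ := by
        apply Continuous.norm
        apply Continuous.sub continuous_const
        exact (continuous_apply j).comp ((continuous_apply i).comp hpcont)
      exact isOpen_lt hc continuous_const
    have ht₀U : t₀ ∈ U := by
      intro i j
      rw [ht₀']
      simp only [sub_self, Matrix.zero_apply, norm_zero]
      positivity
    have hUS : U ⊆ S := by
      intro t ht
      have hq : (1 - p t) = 0 := by
        apply selfAdjoint_idem_small_eq_zero hn _ _ _ ht
        · have hpp : p t * p t = p t := by
            rw [hpt t, mul_assoc, ← mul_assoc (star (y t)), hiso t, one_mul]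
          rw [sub_mul, mul_sub, mul_sub, hpp, mul_one, one_mul, mul_one]
          abel
        · have hps : star (p t) = p t := by
            rw [hpt t, star_mul, star_star]
          rw [star_sub, star_one, hps]
      have : p t = 1 := by
        have := sub_eq_zero.mp hq
        exact this.symm
      exact this
    exact Filter.mem_of_superset (hUopen.mem_nhds ht₀U) hUS
  have hSuniv : S = Set.univ := by
    apply IsClopen.eq_univ ⟨hSclosed, hSopen⟩
    exact ⟨0, hp0⟩
  have hpall : ∀ t, p t = 1 := by
    intro t
    have : t ∈ S := by rw [hSuniv]; trivial
    exact this
  -- conclude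
  ext i j t
  have h1 : ((x * star x).map (φ t)) i j = ((1 : Matrix (Fin n) (Fin n) B).map (φ t)) i j := by
    rw [show (x * star x).map ⇑(φ t) = p t from rfl, hpall t, ← hmapone t]
  exact h1
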